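/- arXiv:0809.2947 — 3 statements merged into one kernel-verified Lean document; each statement's English description precedes it below -/
import Mathlib

section
/- An integral domain D is a ∗-CICD if and only if (A^∗ : B) = (AB⁻¹)^∗ for all nonzero fractional ideals A, B of D. -/
open FractionalIdeal

/-- A star operation on an integral domain `D` with fraction field `K`, acting on
fractional ideals: it fixes `D`, is extensive, monotone, idempotent (all on nonzero
ideals), and commutes with multiplication by nonzero principal fractional ideals. -/
structure StarOp (D : Type*) [CommRing D] [IsDomain D] (K : Type*) [Field K]
    [Algebra D K] [IsFractionRing D K] where
  star : FractionalIdeal (nonZeroDivisors D) K → FractionalIdeal (nonZeroDivisors D) K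
  star_one : star 1 = 1
  le_star : ∀ {A}, A ≠ 0 → A ≤ star A
  star_mono : ∀ {A B}, A ≠ 0 → A ≤ B → star A ≤ star B
  star_idem : ∀ {A}, A ≠ 0 → star (star A) = star A
  star_smul : ∀ {A : FractionalIdeal (nonZeroDivisors D) K} (x : K), x ≠ 0 → A ≠ 0 →
    star (spanSingleton (nonZeroDivisors D) x * A) = spanSingleton (nonZeroDivisors D) x * star A

variable {D K : Type*} [CommRing D] [IsDomain D] [Field K] [Algebra D K] [IsFractionRing D K]

lemma StarAux.mul_ne_zero' {A B : FractionalIdeal (nonZeroDivisors D) K}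
    (hA : A ≠ 0) (hB : B ≠ 0) : A * B ≠ 0 := by
  rw [Ne, eq_zero_iff] at hA hB ⊢
  push_neg at hA hB
  obtain ⟨a, ha, ha0⟩ := hA
  obtain ⟨b, hb, hb0⟩ := hB
  exact fun h => (mul_ne_zero ha0 hb0) (h _ (mul_mem_mul ha hb))

lemma StarAux.star_ne_zero (s : StarOp D K) {A : FractionalIdeal (nonZeroDivisors D) K}
    (hA : A ≠ 0) : s.star A ≠ 0 := fun h =>
  hA (FractionalIdeal.le_zero_iff.mp (h ▸ s.le_star hA))

lemma StarAux.inv_ne_zero' {B : FractionalIdeal (nonZeroDivisors D) K} (hB : B ≠ 0) :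
    B⁻¹ ≠ 0 := by
  obtain ⟨a, aI, ha, haI⟩ := exists_eq_spanSingleton_mul B
  have hfa : algebraMap D K a ≠ 0 := fun h =>
    ha (IsFractionRing.to_map_eq_zero_iff.mp h)
  have hle : spanSingleton (nonZeroDivisors D) (algebraMap D K a) * B ≤ 1 := by
    rw [haI, ← mul_assoc, spanSingleton_mul_spanSingleton, mul_inv_cancel₀ hfa,
      spanSingleton_one, one_mul]
    exact coeIdeal_le_one
  have := (le_div_iff_mul_le hB).mpr hle
  rw [← inv_eq] at this
  intro h
  rw [h, FractionalIdeal.le_zero_iff, spanSingleton_eq_zero_iff] at this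
  exact hfa this

lemma StarAux.star_mul_le (s : StarOp D K) {A B : FractionalIdeal (nonZeroDivisors D) K}
    (hA : A ≠ 0) (hB : B ≠ 0) : s.star A * B ≤ s.star (A * B) := by
  rw [mul_comm]
  refine mul_le.mpr fun b hb a ha => ?_
  rcases eq_or_ne b 0 with rfl | hb0
  · simpa using zero_mem (s.star (A * B))
  have h1 : b * a ∈ spanSingleton (nonZeroDivisors D) b * s.star A := by
    rw [mem_singleton_mul]; exact ⟨a, ha, rfl⟩
  rw [← s.star_smul b hb0 hA] at h1
  have h2 : spanSingleton (nonZeroDivisors D) b * A ≤ A * B := by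
    rw [mul_comm]
    exact mul_le_mul_right (spanSingleton_le_iff_mem.mpr hb) A
  exact s.star_mono (StarAux.mul_ne_zero' (spanSingleton_ne_zero_iff.mpr hb0) hA) h2 h1

lemma StarAux.star_star_mul (s : StarOp D K) {A B : FractionalIdeal (nonZeroDivisors D) K}
    (hA : A ≠ 0) (hB : B ≠ 0) : s.star (s.star A * B) = s.star (A * B) := by
  refine le_antisymm ?_ ?_
  · have h1 := StarAux.star_mul_le s hA hB
    have h2 := s.star_mono (StarAux.mul_ne_zero' (StarAux.star_ne_zero s hA) hB) h1
    rwa [s.star_idem (StarAux.mul_ne_zero' hA hB)] at h2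
  · exact s.star_mono (StarAux.mul_ne_zero' hA hB)
      (mul_le_mul_left (s.le_star hA) B : A * B ≤ s.star A * B)

/-- `D` is a `∗`-CICD iff `(A^∗ : B) = (AB⁻¹)^∗` for all nonzero fractional
ideals `A`, `B`. -/
theorem starCICD_iff_colon_eq (s : StarOp D K) :
    (∀ A : FractionalIdeal (nonZeroDivisors D) K, A ≠ 0 → s.star (A * A⁻¹) = 1) ↔
    (∀ A B : FractionalIdeal (nonZeroDivisors D) K, A ≠ 0 → B ≠ 0 → s.star A / B = s.star (A * B⁻¹)) := by
  constructor
  · intro h A B hA hB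
    have hBi : B⁻¹ ≠ 0 := StarAux.inv_ne_zero' hB
    have hABi : A * B⁻¹ ≠ 0 := StarAux.mul_ne_zero' hA hBi
    have hinv : B⁻¹ * B ≤ 1 := by
      have := (le_div_iff_mul_le hB).mp (le_rfl : (1 : FractionalIdeal (nonZeroDivisors D) K) / B ≤ 1 / B)
      rwa [← inv_eq] at this
    refine le_antisymm ?_ ?_
    · -- star A / B ≤ star (A * B⁻¹)
      set C := s.star A / B with hC
      rcases eq_or_ne C 0 with h0 | hC0
      · rw [h0]; exact zero_le _
      have h1 : C * B ≤ s.star A := (le_div_iff_mul_le hB).mp le_rfl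
      have hCB : C * B ≠ 0 := StarAux.mul_ne_zero' hC0 hB
      calc C = C * 1 := (mul_one C).symm
        _ = C * s.star (B * B⁻¹) := by rw [h B hB]
        _ = s.star (B * B⁻¹) * C := mul_comm _ _
        _ ≤ s.star (B * B⁻¹ * C) := StarAux.star_mul_le s (StarAux.mul_ne_zero' hB hBi) hC0
        _ = s.star (C * B * B⁻¹) := by ring_nf
        _ ≤ s.star (s.star A * B⁻¹) := s.star_mono (StarAux.mul_ne_zero' hCB hBi)
              (mul_le_mul_left h1 B⁻¹)
        _ = s.star (A * B⁻¹) := StarAux.star_star_mul s hA hBi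
    · -- star (A * B⁻¹) ≤ star A / B
      rw [le_div_iff_mul_le hB]
      calc s.star (A * B⁻¹) * B ≤ s.star (A * B⁻¹ * B) := StarAux.star_mul_le s hABi hB
        _ ≤ s.star A := by
            refine s.star_mono (StarAux.mul_ne_zero' hABi hB) ?_
            calc A * B⁻¹ * B = A * (B⁻¹ * B) := mul_assoc _ _ _
              _ ≤ A * 1 := mul_le_mul_right hinv A
              _ = A := mul_one A
  · intro h A hA
    have hAi : A⁻¹ ≠ 0 := StarAux.inv_ne_zero' hA
    have hAAi : A * A⁻¹ ≠ 0 := StarAux.mul_ne_zero' hA hAi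
    have hle : A * A⁻¹ ≤ 1 := by
      have := (le_div_iff_mul_le hA).mp (le_rfl : (1 : FractionalIdeal (nonZeroDivisors D) K) / A ≤ 1 / A)
      rw [← inv_eq] at this
      rwa [mul_comm]
    refine le_antisymm ?_ ?_
    · have := s.star_mono hAAi hle
      rwa [s.star_one] at this
    · rw [← h A A hA hA, le_div_iff_mul_le hA, one_mul]
      exact s.le_star hA
end

section
/- For a star operation ∗ of finite character, an integral domain D in which A⁻¹ is ∗-invertible for all nonzero fractional ideals A satisfies (AB)⁻¹ = (A⁻¹B⁻¹)^∗ for all nonzero fractional ideals A, B, and conversely. -/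
open FractionalIdeal

variable {D K : Type*} [CommRing D] [IsDomain D] [Field K] [Algebra D K] [IsFractionRing D K]

namespace StarOpAux

/-- The inverse of a nonzero fractional ideal is nonzero. -/
theorem inv0 {I : FractionalIdeal (nonZeroDivisors D) K} (hI : I ≠ 0) : I⁻¹ ≠ 0 := by
  obtain ⟨a, haS, ha⟩ := I.isFractional
  have hmem : (algebraMap D K a) ∈ I⁻¹ := by
    rw [mem_inv_iff hI]
    intro y hy
    obtain ⟨c, hc⟩ := ha y hy
    exact (mem_one_iff _).mpr ⟨c, by rw [hc, Algebra.smul_def]⟩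
  intro h0
  rw [h0] at hmem
  have h1 : algebraMap D K a = 0 := (mem_zero_iff _).mp hmem
  have ha0 : a ≠ 0 := nonZeroDivisors.ne_zero haS
  exact ha0 (IsFractionRing.injective D K (by simpa using h1))

theorem mul_inv_le_one' (I : FractionalIdeal (nonZeroDivisors D) K) : I * I⁻¹ ≤ 1 :=
  mul_one_div_le_one

/-- The product of nonzero fractional ideals is nonzero. -/
theorem mul_ne_zero' {I J : FractionalIdeal (nonZeroDivisors D) K} (hI : I ≠ 0) (hJ : J ≠ 0) :
    I * J ≠ 0 := by
  obtain ⟨x, hxI, hx⟩ : ∃ x ∈ I, x ≠ (0 : K) := by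
    by_contra hc; push_neg at hc; exact hI (eq_zero_iff.mpr hc)
  obtain ⟨y, hyJ, hy⟩ : ∃ y ∈ J, y ≠ (0 : K) := by
    by_contra hc; push_neg at hc; exact hJ (eq_zero_iff.mpr hc)
  intro h0
  have : x * y = 0 := (mem_zero_iff _).mp (h0 ▸ mul_mem_mul hxI hyJ)
  exact (mul_ne_zero hx hy) this

theorem le_inv_inv' {I : FractionalIdeal (nonZeroDivisors D) K} (hI : I ≠ 0) :
    I ≤ (I⁻¹)⁻¹ := by
  show I ≤ 1 / I⁻¹
  rw [le_div_iff_mul_le (inv0 hI)]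
  exact mul_inv_le_one' I

theorem inv_inv_inv' {I : FractionalIdeal (nonZeroDivisors D) K} (hI : I ≠ 0) :
    ((I⁻¹)⁻¹)⁻¹ = I⁻¹ :=
  le_antisymm (inv_anti_mono hI (inv0 (inv0 hI)) (le_inv_inv' hI)) (le_inv_inv' (inv0 hI))

/-- A star operation is bounded above by the `v`-operation. -/
theorem star_le_inv_inv (s : StarOp D K) {X : FractionalIdeal (nonZeroDivisors D) K}
    (hX : X ≠ 0) : s.star X ≤ (X⁻¹)⁻¹ := by
  show s.star X ≤ 1 / X⁻¹
  rw [le_div_iff_mul_le (inv0 hX), mul_le]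
  intro u hu y hy
  by_cases hy0 : y = 0
  · rw [hy0, mul_zero]; exact FractionalIdeal.zero_mem _
  · -- `X ≤ span y⁻¹`, hence `star X ≤ star (span y⁻¹) = span y⁻¹`.
    have h1 : spanSingleton (nonZeroDivisors D) y * X ≤ 1 := by
      calc spanSingleton (nonZeroDivisors D) y * X
          ≤ X⁻¹ * X := mul_le_mul_left (spanSingleton_le_iff_mem.mpr hy) X
        _ ≤ 1 := by rw [mul_comm]; exact mul_inv_le_one' X
    have hXle : X ≤ spanSingleton (nonZeroDivisors D) y⁻¹ := by
      have e : X = spanSingleton (nonZeroDivisors D) y⁻¹ *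
          (spanSingleton (nonZeroDivisors D) y * X) := by
        rw [← mul_assoc, spanSingleton_mul_spanSingleton, inv_mul_cancel₀ hy0,
          spanSingleton_one, one_mul]
      calc X = spanSingleton (nonZeroDivisors D) y⁻¹ *
          (spanSingleton (nonZeroDivisors D) y * X) := e
        _ ≤ spanSingleton (nonZeroDivisors D) y⁻¹ * 1 := mul_le_mul_right h1 _
        _ = spanSingleton (nonZeroDivisors D) y⁻¹ := mul_one _
    have hstar : s.star (spanSingleton (nonZeroDivisors D) y⁻¹) =
        spanSingleton (nonZeroDivisors D) y⁻¹ := by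
      have h2 := s.star_smul (A := 1) y⁻¹ (inv_ne_zero hy0) one_ne_zero
      rwa [mul_one, s.star_one, mul_one] at h2
    have hu' : u ∈ spanSingleton (nonZeroDivisors D) y⁻¹ := by
      have := s.star_mono hX hXle
      rw [hstar] at this
      exact this hu
    obtain ⟨d, hd⟩ := (mem_spanSingleton _).mp hu'
    refine (mem_one_iff _).mpr ⟨d, ?_⟩
    rw [← hd, Algebra.smul_def, mul_assoc, inv_mul_cancel₀ hy0, mul_one]

end StarOpAux

open StarOpAux

/-- For a star operation `∗` of finite character, `A⁻¹` is `∗`-invertible for all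
nonzero fractional ideals `A` iff `(AB)⁻¹ = (A⁻¹B⁻¹)^∗` for all nonzero fractional
ideals `A`, `B`. -/
theorem inv_starInvertible_iff_inv_mul (s : StarOp D K)
    (hfc : ∀ (A : FractionalIdeal (nonZeroDivisors D) K), A ≠ 0 → ∀ x ∈ s.star A,
      ∃ F : FractionalIdeal (nonZeroDivisors D) K, F ≠ 0 ∧ (F : Submodule D K).FG ∧ F ≤ A ∧ x ∈ s.star F) :
    (∀ A : FractionalIdeal (nonZeroDivisors D) K, A ≠ 0 → s.star (A⁻¹ * (A⁻¹)⁻¹) = 1) ↔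
    (∀ A B : FractionalIdeal (nonZeroDivisors D) K, A ≠ 0 → B ≠ 0 → (A * B)⁻¹ = s.star (A⁻¹ * B⁻¹)) := by
  constructor
  · intro h A B hA hB
    have hAi : A⁻¹ ≠ 0 := inv0 hA
    have hBi : B⁻¹ ≠ 0 := inv0 hB
    have hBii : (B⁻¹)⁻¹ ≠ 0 := inv0 hBi
    have hAB : A * B ≠ 0 := mul_ne_zero' hA hB
    apply le_antisymm
    · intro x hx
      by_cases hx0 : x = 0
      · rw [hx0]; exact FractionalIdeal.zero_mem _
      have hxA : spanSingleton (nonZeroDivisors D) x * A ≤ B⁻¹ := by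
        show _ ≤ 1 / B
        rw [le_div_iff_mul_le hB, mul_assoc]
        calc spanSingleton (nonZeroDivisors D) x * (A * B)
            ≤ (A * B)⁻¹ * (A * B) := mul_le_mul_left (spanSingleton_le_iff_mem.mpr hx) _
          _ ≤ 1 := by rw [mul_comm]; exact mul_inv_le_one' _
      have hx2 : spanSingleton (nonZeroDivisors D) x * (B⁻¹)⁻¹ ≤ A⁻¹ := by
        show _ ≤ 1 / A
        rw [le_div_iff_mul_le hA]
        calc spanSingleton (nonZeroDivisors D) x * (B⁻¹)⁻¹ * A
            = (spanSingleton (nonZeroDivisors D) x * A) * (B⁻¹)⁻¹ := by ring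
          _ ≤ B⁻¹ * (B⁻¹)⁻¹ := mul_le_mul_left hxA _
          _ ≤ 1 := mul_inv_le_one' _
      have hx3 : spanSingleton (nonZeroDivisors D) x * (B⁻¹ * (B⁻¹)⁻¹) ≤ A⁻¹ * B⁻¹ := by
        calc spanSingleton (nonZeroDivisors D) x * (B⁻¹ * (B⁻¹)⁻¹)
            = (spanSingleton (nonZeroDivisors D) x * (B⁻¹)⁻¹) * B⁻¹ := by ring
          _ ≤ A⁻¹ * B⁻¹ := mul_le_mul_left hx2 _
      have hne : spanSingleton (nonZeroDivisors D) x * (B⁻¹ * (B⁻¹)⁻¹) ≠ 0 :=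
        mul_ne_zero' (spanSingleton_ne_zero_iff.mpr hx0) (mul_ne_zero' hBi hBii)
      have hstep : spanSingleton (nonZeroDivisors D) x ≤ s.star (A⁻¹ * B⁻¹) := by
        have e1 : spanSingleton (nonZeroDivisors D) x =
            s.star (spanSingleton (nonZeroDivisors D) x * (B⁻¹ * (B⁻¹)⁻¹)) := by
          rw [s.star_smul x hx0 (mul_ne_zero' hBi hBii), h B hB, mul_one]
        rw [e1]
        exact s.star_mono hne hx3
      exact hstep (mem_spanSingleton_self _ x)
    · have h1 : A⁻¹ * B⁻¹ ≤ (A * B)⁻¹ := by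
        show _ ≤ 1 / (A * B)
        rw [le_div_iff_mul_le hAB]
        calc A⁻¹ * B⁻¹ * (A * B) = (A * A⁻¹) * (B * B⁻¹) := by ring
          _ ≤ 1 * (B * B⁻¹) := mul_le_mul_left (mul_inv_le_one' A) _
          _ = B * B⁻¹ := one_mul _
          _ ≤ 1 := mul_inv_le_one' B
      calc s.star (A⁻¹ * B⁻¹) ≤ ((A⁻¹ * B⁻¹)⁻¹)⁻¹ := star_le_inv_inv s (mul_ne_zero' hAi hBi)
        _ ≤ (((A * B)⁻¹)⁻¹)⁻¹ :=
          inv_anti_mono (inv0 (inv0 hAB)) (inv0 (mul_ne_zero' hAi hBi))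
            (inv_anti_mono (mul_ne_zero' hAi hBi) (inv0 hAB) h1)
        _ = (A * B)⁻¹ := inv_inv_inv' hAB
  · intro h A hA
    have hAi : A⁻¹ ≠ 0 := inv0 hA
    have key := h A A⁻¹ hA hAi
    set T := (A * A⁻¹)⁻¹ with hTdef
    have hAAi : A * A⁻¹ ≠ 0 := mul_ne_zero' hA hAi
    have hT0 : T ≠ 0 := inv0 hAAi
    have hTi0 : T⁻¹ ≠ 0 := inv0 hT0
    have hone_le : (1 : FractionalIdeal (nonZeroDivisors D) K) ≤ T := by
      have h2 := inv_anti_mono hAAi one_ne_zero (mul_inv_le_one' A)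
      rwa [inv_one] at h2
    have hTA : T * A⁻¹ ≤ A⁻¹ := by
      show _ ≤ 1 / A
      rw [le_div_iff_mul_le hA]
      calc T * A⁻¹ * A = (A * A⁻¹) * T := by ring
        _ ≤ 1 := mul_inv_le_one' _
    have hTT : T * T ≤ T := by
      show _ ≤ 1 / (A * A⁻¹)
      rw [le_div_iff_mul_le hAAi]
      calc T * T * (A * A⁻¹) = (T * A) * (T * A⁻¹) := by ring
        _ ≤ (T * A) * A⁻¹ := mul_le_mul_right hTA _
        _ = (A * A⁻¹) * T := by ring
        _ ≤ 1 := mul_inv_le_one' _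
    have hTTi : T * T⁻¹ ≤ T⁻¹ := by
      show _ ≤ 1 / T
      rw [le_div_iff_mul_le hT0]
      calc T * T⁻¹ * T = (T * T) * T⁻¹ := by ring
        _ ≤ T * T⁻¹ := mul_le_mul_left hTT _
        _ ≤ 1 := mul_inv_le_one' T
    have hTinvinv : (T⁻¹)⁻¹ = T := inv_inv_inv' hAAi
    have key2 := h T T⁻¹ hT0 hTi0
    rw [hTinvinv] at key2
    have hsmall : T⁻¹ * T ≤ 1 := by rw [mul_comm]; exact mul_inv_le_one' T
    have hTiT0 : T⁻¹ * T ≠ 0 := mul_ne_zero' hTi0 hT0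
    have hle1 : (T * T⁻¹)⁻¹ ≤ 1 := by
      rw [key2, ← s.star_one]
      exact s.star_mono hTiT0 hsmall
    have hTle1 : T ≤ 1 := by
      refine le_trans ?_ hle1
      have h3 := inv_anti_mono (mul_ne_zero' hT0 hTi0) hTi0 hTTi
      rwa [hTinvinv] at h3
    have hT1 : T = 1 := le_antisymm hTle1 hone_le
    rw [← key, hT1]
end

section
/- An integral domain D is a ∗-Prüfer domain if and only if for all ∗-invertible nonzero fractional ideals A and B, the sum A + B is ∗-invertible. -/
open FractionalIdeal

variable {D K : Type*} [CommRing D] [IsDomain D] [Field K] [Algebra D K] [IsFractionRing D K]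

namespace StarOpAux

/-- Product of nonzero fractional ideals is nonzero. -/
lemma mul_ne_zero'_s12 {A B : FractionalIdeal (nonZeroDivisors D) K}
    (hA : A ≠ 0) (hB : B ≠ 0) : A * B ≠ 0 := by
  obtain ⟨a, haA, ha⟩ : ∃ a ∈ A, a ≠ 0 := by
    by_contra h; push_neg at h; exact hA (eq_zero_iff.mpr h)
  obtain ⟨b, hbB, hb⟩ : ∃ b ∈ B, b ≠ 0 := by
    by_contra h; push_neg at h; exact hB (eq_zero_iff.mpr h)
  intro h
  have hm := mul_mem_mul haA hbB
  rw [h, mem_zero_iff] at hm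
  exact mul_ne_zero ha hb hm

lemma one_mem_mul {x y : K} (hx : x ∈ (1 : FractionalIdeal (nonZeroDivisors D) K))
    (hy : y ∈ (1 : FractionalIdeal (nonZeroDivisors D) K)) :
    x * y ∈ (1 : FractionalIdeal (nonZeroDivisors D) K) := by
  obtain ⟨x', rfl⟩ := (mem_one_iff _).mp hx
  obtain ⟨y', rfl⟩ := (mem_one_iff _).mp hy
  exact (mem_one_iff _).mpr ⟨x' * y', map_mul _ _ _⟩

/-- `A* ⬝ B ≤ (A⬝B)*`. -/
lemma star_mul_le (s : StarOp D K) {A B : FractionalIdeal (nonZeroDivisors D) K}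
    (hA : A ≠ 0) : s.star A * B ≤ s.star (A * B) := by
  rw [mul_le]
  intro x hx y hy
  by_cases hy0 : y = 0
  · subst hy0; rw [mul_zero, ← mem_coe]; exact Submodule.zero_mem _
  have hxy : x * y ∈ s.star A * spanSingleton (nonZeroDivisors D) y :=
    mul_mem_mul hx (mem_spanSingleton_self _ y)
  have h1 : s.star A * spanSingleton (nonZeroDivisors D) y
      = s.star (spanSingleton (nonZeroDivisors D) y * A) := by
    rw [s.star_smul y hy0 hA, mul_comm]
  have h2 : spanSingleton (nonZeroDivisors D) y * A ≤ A * B := by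
    rw [mul_comm]
    exact _root_.mul_le_mul_right (spanSingleton_le_iff_mem.mpr hy) A
  have h3 : spanSingleton (nonZeroDivisors D) y * A ≠ 0 :=
    mul_ne_zero'_s12 (spanSingleton_ne_zero_iff.mpr hy0) hA
  rw [h1] at hxy
  exact s.star_mono h3 h2 hxy

/-- `(A* ⬝ B)* = (A⬝B)*`. -/
lemma star_star_mul (s : StarOp D K) {A B : FractionalIdeal (nonZeroDivisors D) K}
    (hA : A ≠ 0) (hB : B ≠ 0) : s.star (s.star A * B) = s.star (A * B) := by
  have hAB : A * B ≠ 0 := mul_ne_zero'_s12 hA hB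
  have hle : A * B ≤ s.star A * B := _root_.mul_le_mul_left (s.le_star hA) B
  have hne : s.star A * B ≠ 0 := fun h => hAB (FractionalIdeal.le_zero_iff.mp (h ▸ hle))
  refine le_antisymm ?_ (s.star_mono hAB hle)
  have h4 := s.star_mono hne (star_mul_le s hA (B := B))
  rwa [s.star_idem hAB] at h4

lemma star_principal_inv (s : StarOp D K) {x : K} (hx : x ≠ 0) :
    s.star (spanSingleton (nonZeroDivisors D) x * (spanSingleton (nonZeroDivisors D) x)⁻¹) = 1 := by
  rw [spanSingleton_mul_inv K hx, s.star_one]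

lemma inv_ne_zero' {A : FractionalIdeal (nonZeroDivisors D) K} (hA : A ≠ 0) :
    A⁻¹ ≠ 0 := by
  intro h
  have hd := den_mem_inv hA
  rw [h, mem_zero_iff] at hd
  exact nonZeroDivisors.coe_ne_zero A.den
    ((injective_iff_map_eq_zero (algebraMap D K)).mp
      (IsFractionRing.injective D K) _ hd)

end StarOpAux

open StarOpAux in
/-- `D` is a `∗`-Prüfer domain iff the sum of any two `∗`-invertible nonzero
fractional ideals is `∗`-invertible. -/
theorem starPrufer_iff_sum_invertible (s : StarOp D K) :
    (∀ F : FractionalIdeal (nonZeroDivisors D) K, F ≠ 0 → (F : Submodule D K).FG → s.star (F * F⁻¹) = 1) ↔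
    (∀ A B : FractionalIdeal (nonZeroDivisors D) K, A ≠ 0 → B ≠ 0 → s.star (A * A⁻¹) = 1 → s.star (B * B⁻¹) = 1 →
      s.star ((A + B) * (A + B)⁻¹) = 1) := by
  classical
  constructor
  · -- forward direction
    intro h A B hA hB hAi hBi
    set C := A + B with hCdef
    clear_value C
    have hAC : A ≤ C := by rw [hCdef, ← sup_eq_add]; exact le_sup_left
    have hBC : B ≤ C := by rw [hCdef, ← sup_eq_add]; exact le_sup_right
    have hC : C ≠ 0 := fun h0 => hA (FractionalIdeal.le_zero_iff.mp (h0 ▸ hAC))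
    have hCi : C⁻¹ ≠ 0 := inv_ne_zero' hC
    have hAi0 : A⁻¹ ≠ 0 := inv_ne_zero' hA
    have hBi0 : B⁻¹ ≠ 0 := inv_ne_zero' hB
    have hAA : A * A⁻¹ ≠ 0 := mul_ne_zero'_s12 hA hAi0
    have hBB : B * B⁻¹ ≠ 0 := mul_ne_zero'_s12 hB hBi0
    have hCC : C * C⁻¹ ≠ 0 := mul_ne_zero'_s12 hC hCi
    -- key step : A * A⁻¹ * (B * B⁻¹) ≤ star (C * C⁻¹)
    have key : A * A⁻¹ * (B * B⁻¹) ≤ s.star (C * C⁻¹) := by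
      rw [mul_le]
      intro p hp q hq
      rw [← mem_coe, coe_mul] at hp hq
      rw [← mem_coe]
      refine Submodule.mul_induction_on
        (C := fun r => r * q ∈ (s.star (C * C⁻¹) : Submodule D K)) hp (fun a ha a' ha' => ?_)
        (fun x y hx hy => by
          show (x + y) * q ∈ (s.star (C * C⁻¹) : Submodule D K)
          rw [add_mul]; exact add_mem hx hy)
      refine Submodule.mul_induction_on
        (C := fun r => a * a' * r ∈ (s.star (C * C⁻¹) : Submodule D K)) hq (fun b hb b' hb' => ?_)
        (fun x y hx hy => by
          show a * a' * (x + y) ∈ (s.star (C * C⁻¹) : Submodule D K)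
          rw [mul_add]; exact add_mem hx hy)
      rw [mem_coe] at ha ha' hb hb' ⊢
      -- pure tensor case
      set x := a * a' * (b * b') with hxdef
      clear_value x
      by_cases hx0 : x = 0
      · rw [hx0, ← mem_coe]; exact Submodule.zero_mem _
      have ha0 : a ≠ 0 := fun h' => hx0 (by simp [hxdef, h'])
      have hb0 : b ≠ 0 := fun h' => hx0 (by simp [hxdef, h'])
      set F : FractionalIdeal (nonZeroDivisors D) K :=
        spanSingleton (nonZeroDivisors D) a + spanSingleton (nonZeroDivisors D) b with hFdef
      clear_value F
      have haF : a ∈ F := by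
        rw [hFdef, mem_add]
        exact ⟨a, mem_spanSingleton_self _ a, 0, zero_mem _, add_zero a⟩
      have hbF : b ∈ F := by
        rw [hFdef, mem_add]
        exact ⟨0, zero_mem _, b, mem_spanSingleton_self _ b, zero_add b⟩
      have hF : F ≠ 0 := by
        intro h0
        rw [h0, mem_zero_iff] at haF
        exact ha0 haF
      have hFG : (F : Submodule D K).FG := by
        refine ⟨{a, b}, ?_⟩
        rw [hFdef, coe_add, coe_spanSingleton, coe_spanSingleton]
        simp [Submodule.span_insert, Submodule.add_eq_sup]
      have hF1 : s.star (F * F⁻¹) = 1 := h F hF hFG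
      have hFF : F * F⁻¹ ≠ 0 := mul_ne_zero'_s12 hF (inv_ne_zero' hF)
      have hFC : F ≤ C := by
        rw [hFdef, ← sup_eq_add]
        exact sup_le (spanSingleton_le_iff_mem.mpr (hAC ha)) (spanSingleton_le_iff_mem.mpr (hBC hb))
      -- spanSingleton x * F⁻¹ ≤ C⁻¹
      have hT : spanSingleton (nonZeroDivisors D) x * F⁻¹ ≤ C⁻¹ := by
        rw [mul_le]
        intro u hu t ht
        obtain ⟨d, rfl⟩ := (mem_spanSingleton _).mp hu
        rw [mem_inv_iff hC]
        intro c hc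
        rw [smul_mul_assoc, smul_mul_assoc, ← mem_coe]
        refine Submodule.smul_mem _ d ?_
        rw [mem_coe]
        rw [hCdef, mem_add] at hc
        obtain ⟨y, hy, z, hz, rfl⟩ := hc
        have heq : x * t * (y + z)
            = (t * a) * (a' * y) * (b * b') + (t * b) * (a' * a) * (b' * z) := by
          rw [hxdef]; ring
        rw [heq]
        have m1 : t * a ∈ (1 : FractionalIdeal (nonZeroDivisors D) K) :=
          (mem_inv_iff hF).mp ht a haF
        have m2 : a' * y ∈ (1 : FractionalIdeal (nonZeroDivisors D) K) :=
          (mem_inv_iff hA).mp ha' y hy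
        have m3 : b * b' ∈ (1 : FractionalIdeal (nonZeroDivisors D) K) := by
          rw [mul_comm]; exact (mem_inv_iff hB).mp hb' b hb
        have m4 : t * b ∈ (1 : FractionalIdeal (nonZeroDivisors D) K) :=
          (mem_inv_iff hF).mp ht b hbF
        have m5 : a' * a ∈ (1 : FractionalIdeal (nonZeroDivisors D) K) :=
          (mem_inv_iff hA).mp ha' a ha
        have m6 : b' * z ∈ (1 : FractionalIdeal (nonZeroDivisors D) K) :=
          (mem_inv_iff hB).mp hb' z hz
        rw [← mem_coe]
        exact add_mem (mem_coe.mpr (one_mem_mul (one_mem_mul m1 m2) m3))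
          (mem_coe.mpr (one_mem_mul (one_mem_mul m4 m5) m6))
      have hprod : spanSingleton (nonZeroDivisors D) x * (F * F⁻¹) ≤ C * C⁻¹ := by
        have e : spanSingleton (nonZeroDivisors D) x * (F * F⁻¹)
            = F * (spanSingleton (nonZeroDivisors D) x * F⁻¹) := by ring
        rw [e]
        exact le_trans (_root_.mul_le_mul_right hT F) (_root_.mul_le_mul_left hFC C⁻¹)
      have hxne : spanSingleton (nonZeroDivisors D) x ≠ 0 := spanSingleton_ne_zero_iff.mpr hx0
      have hne : spanSingleton (nonZeroDivisors D) x * (F * F⁻¹) ≠ 0 := mul_ne_zero'_s12 hxne hFF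
      have hstar := s.star_mono hne hprod
      rw [s.star_smul x hx0 hFF, hF1, mul_one] at hstar
      exact hstar (mem_spanSingleton_self _ x)
    have h1 : s.star (A * A⁻¹ * (B * B⁻¹)) = 1 := by
      rw [← star_star_mul s hAA hBB, hAi, one_mul, hBi]
    have hge : (1 : FractionalIdeal (nonZeroDivisors D) K) ≤ s.star (C * C⁻¹) := by
      have h5 := s.star_mono (mul_ne_zero'_s12 hAA hBB) key
      rwa [s.star_idem hCC, h1] at h5
    have hle : s.star (C * C⁻¹) ≤ 1 := by
      have hle1 : C * C⁻¹ ≤ 1 := by rw [inv_eq]; exact mul_one_div_le_one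
      have h6 := s.star_mono hCC hle1
      rwa [s.star_one] at h6
    exact le_antisymm hle hge
  · -- reverse direction
    intro h2 F hF hFG
    obtain ⟨T, hT⟩ := hFG
    have claim : ∀ (T : Finset K) (F : FractionalIdeal (nonZeroDivisors D) K),
        (F : Submodule D K) = Submodule.span D (T : Set K) → F ≠ 0 → s.star (F * F⁻¹) = 1 := by
      intro T
      classical
      induction T using Finset.induction_on with
      | empty =>
        intro F hFT hF
        refine absurd (coeToSubmodule_injective ?_) hF
        show (F : Submodule D K) = ((0 : FractionalIdeal (nonZeroDivisors D) K) : Submodule D K)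
        rw [hFT]; simp
      | @insert a T' haT ih =>
        intro F hFT hF
        have hBle : Submodule.span D (T' : Set K) ≤ (F : Submodule D K) := by
          rw [hFT, Finset.coe_insert]
          exact Submodule.span_mono (Set.subset_insert a _)
        set B : FractionalIdeal (nonZeroDivisors D) K :=
          ⟨Submodule.span D (T' : Set K), isFractional_of_le hBle⟩ with hBdef
        have hBcoe : (B : Submodule D K) = Submodule.span D (T' : Set K) := rfl
        have hFeq : F = spanSingleton (nonZeroDivisors D) a + B := by
          apply coeToSubmodule_injective
          show (F : Submodule D K)
            = ((spanSingleton (nonZeroDivisors D) a + B : FractionalIdeal (nonZeroDivisors D) K) :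
                Submodule D K)
          rw [coe_add, coe_spanSingleton, hBcoe, hFT, Finset.coe_insert, Submodule.span_insert,
            Submodule.add_eq_sup]
        by_cases hB : B = 0
        · have ha : a ≠ 0 := by
            intro h0
            exact hF (by rw [hFeq, hB, add_zero, h0, spanSingleton_zero])
          rw [hFeq, hB, add_zero]
          exact star_principal_inv s ha
        · by_cases ha : a = 0
          · rw [hFeq, ha, spanSingleton_zero, zero_add]
            exact ih B hBcoe hB
          · rw [hFeq]
            exact h2 (spanSingleton _ a) B (spanSingleton_ne_zero_iff.mpr ha) hB
              (star_principal_inv s ha) (ih B hBcoe hB)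
    exact claim T F hT.symm hF
end
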